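/- Let K be a field and let d₁ ∈ K satisfy 1 − d₁ ≠ 0. Define e₁ = 1, e₂ = −1, d₂ = 1 − d₁, c = d₁² − 1, b = d₁³ − d₁² − 2·d₁ + 2, and a = (b² − b·d₁ − d₂)/d₂. Then all eleven G₂ consistency equations hold: (1) b² = b·d₁ + d₂ + a·d₂; (2) c² = b·d₁ + c·d₁ + d₂; (3) b·c = 2·e₁·b + 2·e₂ + a·e₂ + e₁·c; (4) c·d₁ = d₁·e₁ + c·e₁ + b·e₁ + e₂; (5) c·d₂ = d₂·e₁ + b·e₂; (6) d₁·e₁ + d₂ = e₁²; (7) d₁·e₁ + d₁² = e₁² + c·e₁ + d₁·e₁; (8) d₁·e₁ = e₁² + d₁·e₁ + e₂; (9) d₁·e₂ + d₂·c = e₁·e₂ + b·e₂ + 2·d₂·e₁; (10) d₁·e₂ = e₁·e₂ + d₂·e₁; (11) d₁·e₂ + d₁·d₂ = e₁·e₂ + e₂·c. -/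
import Mathlib

/-- Over any field, once `d₁` is chosen with `1 - d₁ ≠ 0` and the remaining
coefficients are defined from it, all eleven G₂ consistency equations hold. -/
theorem g2_one_parameter_family_satisfies_consistency
    (K : Type*) [Field K] (d₁ : K) (hd₁ : 1 - d₁ ≠ 0)
    (e₁ e₂ d₂ c b a : K)
    (he₁ : e₁ = 1)
    (he₂ : e₂ = -1)
    (hd₂ : d₂ = 1 - d₁)
    (hc : c = d₁ ^ 2 - 1)
    (hb : b = d₁ ^ 3 - d₁ ^ 2 - 2 * d₁ + 2)
    (ha : a = (b ^ 2 - b * d₁ - d₂) / d₂) :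
    b ^ 2 = b * d₁ + d₂ + a * d₂ ∧
    c ^ 2 = b * d₁ + c * d₁ + d₂ ∧
    b * c = 2 * e₁ * b + 2 * e₂ + a * e₂ + e₁ * c ∧
    c * d₁ = d₁ * e₁ + c * e₁ + b * e₁ + e₂ ∧
    c * d₂ = d₂ * e₁ + b * e₂ ∧
    d₁ * e₁ + d₂ = e₁ ^ 2 ∧
    d₁ * e₁ + d₁ ^ 2 = e₁ ^ 2 + c * e₁ + d₁ * e₁ ∧
    d₁ * e₁ = e₁ ^ 2 + d₁ * e₁ + e₂ ∧
    d₁ * e₂ + d₂ * c = e₁ * e₂ + b * e₂ + 2 * d₂ * e₁ ∧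
    d₁ * e₂ = e₁ * e₂ + d₂ * e₁ ∧
    d₁ * e₂ + d₁ * d₂ = e₁ * e₂ + e₂ * c := by
  subst he₁ he₂ hd₂ hc hb ha
  refine ⟨?_, by ring, ?_, by ring, by ring, by ring, by ring, by ring, by ring, by ring, by ring⟩ <;>
  field_simp <;> ring
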